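/- arXiv:1010.2812 — 4 statements merged into one kernel-verified Lean document; each statement's English description precedes it below -/
import Mathlib

section
/- Suppose W A Z = D^{-1} with W lower unitriangular (rows w_i), Z upper unitriangular (columns z_j), D = diag(d_1,...,d_n). If for each j the column z_j is written as z_j = e_j − Σ_{i<j} α_i^{(j)} z_i (which is possible since z_1,...,z_{j−1}, e_j are linearly independent), then α_i^{(j)} = d_i · (w_i A e_j) for all i < j, where A e_j is the j-th column of A. -/
open Matrix BigOperators Finset

def LowerUnitri {n : ℕ} (W : Matrix (Fin n) (Fin n) ℝ) : Prop :=
  (∀ i j : Fin n, i < j → W i j = 0) ∧ (∀ i : Fin n, W i i = 1)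

def UpperUnitri {n : ℕ} (Z : Matrix (Fin n) (Fin n) ℝ) : Prop :=
  (∀ i j : Fin n, j < i → Z i j = 0) ∧ (∀ i : Fin n, Z i i = 1)

theorem stmt3 {n : ℕ} (A W Z : Matrix (Fin n) (Fin n) ℝ) (d : Fin n → ℝ)
    (α : Fin n → Fin n → ℝ)
    (hW : LowerUnitri W) (hZ : UpperUnitri Z) (hd : ∀ i, d i ≠ 0)
    (h : W * A * Z = (Matrix.diagonal d)⁻¹)
    (hexp : ∀ j k : Fin n,
      Z k j = (if k = j then (1 : ℝ) else 0)
        - ∑ i ∈ Finset.univ.filter (· < j), α i j * Z k i) :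
    ∀ i j : Fin n, i < j → α i j = d i * ∑ k, W i k * A k j := by
  intro i j hij
  set M := W * A with hM
  have hinv : (Matrix.diagonal d)⁻¹ = Matrix.diagonal (fun i => (d i)⁻¹) := by
    apply Matrix.inv_eq_right_inv
    rw [Matrix.diagonal_mul_diagonal]
    convert Matrix.diagonal_one with i
    exact mul_inv_cancel₀ (hd i)
  have hMZ : ∀ i' : Fin n, (M * Z) i i' = if i = i' then (d i)⁻¹ else 0 := by
    intro i'
    rw [hM, h, hinv, Matrix.diagonal_apply]
  have step : (M * Z) i j = M i j - ∑ i' ∈ Finset.univ.filter (· < j), α i' j * (M * Z) i i' := by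
    simp only [Matrix.mul_apply]
    have : ∀ k, M i k * Z k j =
        (if k = j then M i k else 0) - ∑ i' ∈ Finset.univ.filter (· < j), α i' j * (M i k * Z k i') := by
      intro k
      rw [hexp j k, mul_sub, Finset.mul_sum]
      congr 1
      · split <;> simp
      · apply Finset.sum_congr rfl
        intro i' _
        ring
    rw [Finset.sum_congr rfl (fun k _ => this k), Finset.sum_sub_distrib,
      Finset.sum_ite_eq' Finset.univ j (fun k => M i k)]
    simp only [Finset.mem_univ, if_true]
    congr 1
    rw [Finset.sum_comm]
    apply Finset.sum_congr rfl
    intro i' _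
    rw [Finset.mul_sum]
  have hsum : ∑ i' ∈ Finset.univ.filter (· < j), α i' j * (M * Z) i i' = α i j * (d i)⁻¹ := by
    have hcong : ∀ i' ∈ Finset.univ.filter (· < j),
        α i' j * (M * Z) i i' = if i' = i then α i j * (d i)⁻¹ else 0 := by
      intro i' _
      rw [hMZ i']
      rcases eq_or_ne i' i with rfl | hne
      · simp
      · simp [hne, (Ne.symm hne)]
    rw [Finset.sum_congr rfl hcong, Finset.sum_ite_eq']
    simp [Finset.mem_filter, hij]
  have h0 : (M * Z) i j = 0 := by rw [hMZ]; simp [hij.ne]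
  rw [h0, hsum] at step
  have hMij : M i j = ∑ k, W i k * A k j := by rw [hM, Matrix.mul_apply]
  rw [hMij] at step
  have e : α i j * (d i)⁻¹ = ∑ k, W i k * A k j := by linarith
  rw [mul_inv_eq_iff_eq_mul₀ (hd i)] at e
  rw [e]; ring
end

section
/- Suppose W A Z = D^{-1} with W lower unitriangular (rows w_j), Z upper unitriangular (columns z_i), D = diag(d_1,...,d_n). If the row w_j is written as w_j = e_j^T − Σ_{i<j} β_i^{(j)} w_i, then β_i^{(j)} = d_i · (e_j^T A z_i) for all i < j, i.e., β_i^{(j)} equals d_i times the product of the j-th row of A with z_i. -/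
open Matrix BigOperators Finset

theorem stmt4 {n : ℕ} (A W Z : Matrix (Fin n) (Fin n) ℝ) (d : Fin n → ℝ)
    (β : Fin n → Fin n → ℝ)
    (hW : LowerUnitri W) (hZ : UpperUnitri Z) (hd : ∀ i, d i ≠ 0)
    (h : W * A * Z = (Matrix.diagonal d)⁻¹)
    (hexp : ∀ j k : Fin n,
      W j k = (if k = j then (1 : ℝ) else 0)
        - ∑ i ∈ Finset.univ.filter (· < j), β i j * W i k) :
    ∀ i j : Fin n, i < j → β i j = d i * ∑ k, A j k * Z k i := by
  intro i j hij
  set M := A * Z with hMdef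
  have hWM : ∀ a b : Fin n, (W * M) a b = if a = b then (d a)⁻¹ else 0 := by
    intro a b
    have hh : W * M = (Matrix.diagonal d)⁻¹ := by
      rw [hMdef, ← Matrix.mul_assoc]; exact h
    have hdi : (Matrix.diagonal d)⁻¹ = Matrix.diagonal (fun k => (d k)⁻¹) := by
      apply Matrix.inv_eq_right_inv
      ext a' b'
      by_cases hab : a' = b' <;>
        simp [Matrix.diagonal_mul_diagonal, Matrix.diagonal_apply, Matrix.one_apply,
          hab, mul_inv_cancel₀ (hd b')]
    rw [hh, hdi, Matrix.diagonal_apply]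
  have hMji : M j i = ((W * M) j i)
      + ∑ i' ∈ Finset.univ.filter (· < j), β i' j * (W * M) i' i := by
    have e1 : M j i = ∑ k, (if k = j then (1 : ℝ) else 0) * M k i := by simp
    have e2 : ∀ k, (if k = j then (1 : ℝ) else 0)
        = W j k + ∑ i' ∈ Finset.univ.filter (· < j), β i' j * W i' k := by
      intro k; rw [hexp j k]; ring
    rw [e1]
    simp_rw [e2, add_mul, Finset.sum_add_distrib, Finset.sum_mul, Matrix.mul_apply]
    congr 1
    rw [Finset.sum_comm]
    refine Finset.sum_congr rfl fun i' _ => ?_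
    rw [Finset.mul_sum]
    exact Finset.sum_congr rfl fun k _ => by ring
  have hji : (W * M) j i = 0 := by rw [hWM]; simp [Ne.symm (ne_of_lt hij)]
  have hsum : ∑ i' ∈ Finset.univ.filter (· < j), β i' j * (W * M) i' i
      = β i j * (d i)⁻¹ := by
    rw [Finset.sum_eq_single i]
    · rw [hWM]; simp
    · intro b _ hb; rw [hWM]; simp [hb]
    · intro hh; exact absurd (by simp [hij]) hh
  have : M j i = β i j * (d i)⁻¹ := by rw [hMji, hji, hsum, zero_add]
  have hM : M j i = ∑ k, A j k * Z k i := by rw [hMdef, Matrix.mul_apply]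
  rw [← hM, this, mul_comm (β i j), ← mul_assoc, mul_inv_cancel₀ (hd i), one_mul]
end

section
/- Let A be symmetric positive definite and let W A W^T = D^{-1} with W lower unitriangular and D diagonal. Then for each j, 1/d_j = min over vectors v with v_j = 1 and v_k = 0 for k > j of v^T A v, and in particular 0 < 1/d_j ≤ a_{jj}. -/
open Matrix BigOperators

theorem stmt16 {n : ℕ} (A W : Matrix (Fin n) (Fin n) ℝ) (d : Fin n → ℝ)
    (hA : A.PosDef)
    (hW : LowerUnitri W)
    (h : W * A * Wᵀ = (Matrix.diagonal d)⁻¹) :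
    ∀ j : Fin n,
      IsLeast {r : ℝ | ∃ v : Fin n → ℝ, v j = 1 ∧ (∀ k, j < k → v k = 0) ∧
        r = ∑ i, ∑ k, v i * A i k * v k} (1 / d j) ∧
      0 < 1 / d j ∧ 1 / d j ≤ A j j := by
  classical
  -- quadratic form as dot product
  have hQ : ∀ v : Fin n → ℝ, (∑ i, ∑ k, v i * A i k * v k) = v ⬝ᵥ A *ᵥ v := by
    intro v
    simp [dotProduct, mulVec, Finset.mul_sum, mul_assoc, mul_comm, mul_left_comm]
  -- all d i nonzero, via determinants
  have hdet0 : ∀ i : Fin n, d i ≠ 0 := by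
    have h1 : IsUnit ((Matrix.diagonal d)⁻¹).det := by
      rw [← h]
      simp only [Matrix.det_mul, Matrix.det_transpose]
      have hbt : W.BlockTriangular OrderDual.toDual := fun i j hij => hW.1 i j hij
      rw [Matrix.det_of_lowerTriangular W hbt]
      simp only [hW.2, Finset.prod_const_one, one_mul, mul_one]
      exact (isUnit_iff_ne_zero).mpr (ne_of_gt hA.det_pos)
    have h2 : IsUnit (Matrix.diagonal d).det := Matrix.isUnit_nonsing_inv_det_iff.mp h1
    rw [Matrix.det_diagonal] at h2
    have h3 : (∏ i, d i) ≠ 0 := h2.ne_zero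
    intro i
    exact fun h0 => h3 (Finset.prod_eq_zero (Finset.mem_univ i) h0)
  have hdiaginv : (Matrix.diagonal d)⁻¹ = Matrix.diagonal (fun i => (d i)⁻¹) := by
    apply Matrix.inv_eq_right_inv
    rw [Matrix.diagonal_mul_diagonal]
    convert Matrix.diagonal_one using 2
    exact funext fun i => mul_inv_cancel₀ (hdet0 i)
  -- key identity
  have key : ∀ u : Fin n → ℝ,
      (u ᵥ* W) ⬝ᵥ A *ᵥ (u ᵥ* W) = ∑ i, (d i)⁻¹ * u i ^ 2 := by
    intro u
    calc (u ᵥ* W) ⬝ᵥ A *ᵥ (u ᵥ* W)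
        = (u ᵥ* W) ⬝ᵥ ((A * Wᵀ) *ᵥ u) := by rw [← mulVec_transpose, mulVec_mulVec]
      _ = u ⬝ᵥ W *ᵥ ((A * Wᵀ) *ᵥ u) := by rw [← dotProduct_mulVec]
      _ = u ⬝ᵥ (W * A * Wᵀ) *ᵥ u := by rw [mulVec_mulVec, mul_assoc]
      _ = u ⬝ᵥ (Matrix.diagonal (fun i => (d i)⁻¹)) *ᵥ u := by rw [h, hdiaginv]
      _ = ∑ i, (d i)⁻¹ * u i ^ 2 := by
          simp only [dotProduct, mulVec_diagonal]
          exact Finset.sum_congr rfl fun i _ => by ring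
  have hsingle : ∀ i : Fin n, (Pi.single i 1 : Fin n → ℝ) ᵥ* W = W i := by
    intro i
    funext k
    simp [vecMul, dotProduct, Pi.single_apply]
  -- positivity of d
  have hdpos : ∀ i : Fin n, 0 < d i := by
    intro i
    have h1 : (0:ℝ) < W i ⬝ᵥ A *ᵥ W i := by
      have := hA.dotProduct_mulVec_pos (x := W i) (fun h0 => by simpa [hW.2 i] using congrFun h0 i)
      simpa using this
    rw [← hsingle i, key] at h1
    have h2 : (0:ℝ) < (d i)⁻¹ := by
      simpa [Pi.single_apply, Finset.sum_ite_eq'] using h1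
    exact inv_pos.mp h2
  -- determinant of W
  have hdet : IsUnit W.det := by
    have hbt : W.BlockTriangular OrderDual.toDual := fun i j hij => hW.1 i j hij
    rw [Matrix.det_of_lowerTriangular W hbt]
    simp [hW.2]
  intro j
  have hmem : (1 / d j) ∈ {r : ℝ | ∃ v : Fin n → ℝ, v j = 1 ∧ (∀ k, j < k → v k = 0) ∧
      r = ∑ i, ∑ k, v i * A i k * v k} := by
    refine ⟨W j, hW.2 j, fun k hk => hW.1 j k hk, ?_⟩
    rw [hQ, ← hsingle j, key]
    simp [Pi.single_apply, Finset.sum_ite_eq', one_div]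
  have hlb : ∀ r ∈ {r : ℝ | ∃ v : Fin n → ℝ, v j = 1 ∧ (∀ k, j < k → v k = 0) ∧
      r = ∑ i, ∑ k, v i * A i k * v k}, 1 / d j ≤ r := by
    rintro r ⟨v, hvj, hvk, rfl⟩
    set u : Fin n → ℝ := v ᵥ* W⁻¹ with hu
    have hvu : v = u ᵥ* W := by
      rw [hu, vecMul_vecMul, Matrix.nonsing_inv_mul W hdet, vecMul_one]
    have hvW : ∀ k : Fin n, v k = ∑ i, u i * W i k := by
      intro k; conv_lhs => rw [hvu]
      simp [vecMul, dotProduct]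
    -- downward induction: u k = v k for k ≥ j
    have hkey : ∀ m : ℕ, ∀ k : Fin n, n - (k:ℕ) ≤ m → j ≤ k → u k = v k := by
      intro m
      induction m using Nat.strong_induction_on with
      | _ m ih =>
        intro k hk hjk
        have := hvW k
        rw [Finset.sum_eq_single k] at this
        · rw [this, hW.2 k, mul_one]
        · intro b _ hbk
          rcases lt_or_gt_of_ne hbk with hb | hb
          · rw [hW.1 b k hb, mul_zero]
          · have h1 : u b = v b := by
              refine ih (n - (b:ℕ)) ?_ b le_rfl (le_of_lt (lt_of_le_of_lt hjk hb))
              have : (b:ℕ) < n := b.isLt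
              omega
            rw [h1, hvk b (lt_of_le_of_lt hjk hb), zero_mul]
        · intro hkabs; exact absurd (Finset.mem_univ k) hkabs
    have huj : u j = 1 := by
      rw [hkey (n - (j:ℕ)) j le_rfl le_rfl, hvj]
    have hsum : (∑ i, ∑ k, v i * A i k * v k) = ∑ i, (d i)⁻¹ * u i ^ 2 := by
      rw [hQ, hvu, key]
    rw [hsum]
    have hterm : (1 : ℝ) / d j = (d j)⁻¹ * u j ^ 2 := by
      rw [huj, one_div]; ring
    rw [hterm]
    refine Finset.single_le_sum (f := fun i => (d i)⁻¹ * u i ^ 2) (fun i _ => ?_) (Finset.mem_univ j)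
    have := hdpos i
    positivity
  refine ⟨⟨hmem, hlb⟩, ?_, ?_⟩
  · rw [one_div]; exact inv_pos.mpr (hdpos j)
  · -- A j j is in the set via v = e_j
    have : A j j ∈ {r : ℝ | ∃ v : Fin n → ℝ, v j = 1 ∧ (∀ k, j < k → v k = 0) ∧
        r = ∑ i, ∑ k, v i * A i k * v k} := by
      refine ⟨Pi.single j 1, by simp, fun k hk => by simp [Pi.single_apply, hk.ne'], ?_⟩
      simp [Pi.single_apply, Finset.sum_ite_eq', Finset.sum_ite_eq]
    exact hlb _ this
end

section
/- Let A be an M-matrix with LDU factorization A = L D^{-1} U (L lower unitriangular, U upper unitriangular, D^{-1} = diag(1/d_1,...,1/d_n)). Then all strict lower entries of L and strict upper entries of U are nonpositive, and 1/d_j > 0 for all j. -/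
open Matrix

def IsMmatrix {n : ℕ} (B : Matrix (Fin n) (Fin n) ℝ) : Prop :=
  (∀ i j : Fin n, i ≠ j → B i j ≤ 0) ∧ IsUnit B.det ∧ (∀ i j : Fin n, 0 ≤ B⁻¹ i j)

/-- Splitting off the `m`-th term of a sum over indices `≥ m`. -/
lemma s17split {n : ℕ} (m : Fin n) (t : Fin n → ℝ) :
    (∑ k : Fin n, if m.val ≤ k.val then t k else 0)
      = t m + ∑ k : Fin n, if m.val + 1 ≤ k.val then t k else 0 := by
  have key : ∀ k : Fin n, (if m.val ≤ k.val then t k else 0)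
      = (if k = m then t k else 0) + (if m.val + 1 ≤ k.val then t k else 0) := by
    intro k
    rcases lt_trichotomy k.val m.val with hk | hk | hk
    · rw [if_neg (show ¬ m.val ≤ k.val by omega),
        if_neg (show ¬ k = m from fun e => by rw [e] at hk; omega),
        if_neg (show ¬ m.val + 1 ≤ k.val by omega)]
      ring
    · have hkm : k = m := Fin.ext hk
      rw [if_pos (show m.val ≤ k.val by omega), if_pos hkm,
        if_neg (show ¬ m.val + 1 ≤ k.val by omega)]
      ring
    · rw [if_pos (show m.val ≤ k.val by omega),
        if_neg (show ¬ k = m from fun e => by rw [e] at hk; omega),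
        if_pos (show m.val + 1 ≤ k.val by omega)]
      ring
  rw [Finset.sum_congr rfl (fun k _ => key k), Finset.sum_add_distrib,
    Finset.sum_ite_eq' Finset.univ m t]
  simp

theorem stmt17 {n : ℕ} (A L U : Matrix (Fin n) (Fin n) ℝ) (d : Fin n → ℝ)
    (hA : IsMmatrix A)
    (hL : LowerUnitri L) (hU : UpperUnitri U) (hd : ∀ i, d i ≠ 0)
    (h : A = L * Matrix.diagonal (fun j => (d j)⁻¹) * U) :
    (∀ i j : Fin n, j < i → L i j ≤ 0) ∧ (∀ i j : Fin n, i < j → U i j ≤ 0) ∧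
      (∀ j : Fin n, 0 < (d j)⁻¹) := by
  obtain ⟨hoff, hdet, hinvnn⟩ := hA
  -- the positive weight vector x = A⁻¹ * 1
  set x : Fin n → ℝ := fun j => ∑ k, A⁻¹ j k with hxdef
  have hAinv : A * A⁻¹ = 1 := Matrix.mul_nonsing_inv A hdet
  have hinvA : A⁻¹ * A = 1 := Matrix.nonsing_inv_mul A hdet
  have hxpos : ∀ j, 0 < x j := by
    intro j
    have hnn : 0 ≤ x j := Finset.sum_nonneg fun k _ => hinvnn j k
    rcases hnn.lt_or_eq with hlt | heq
    · exact hlt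
    · exfalso
      have hz : ∀ k ∈ Finset.univ, A⁻¹ j k = 0 :=
        (Finset.sum_eq_zero_iff_of_nonneg (fun k _ => hinvnn j k)).mp heq.symm
      have h1 : (A⁻¹ * A) j j = 1 := by rw [hinvA]; simp
      rw [Matrix.mul_apply] at h1
      rw [Finset.sum_eq_zero (fun k hk => by rw [hz k hk]; ring)] at h1
      norm_num at h1
  have hAx : ∀ i, (∑ j, A i j * x j) = 1 := by
    intro i
    have e : (∑ j, A i j * x j) = ∑ k : Fin n, (A * A⁻¹) i k := by
      simp only [hxdef, Matrix.mul_apply, Finset.mul_sum]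
      exact Finset.sum_comm
    rw [e, hAinv]
    simp [Matrix.one_apply]
  -- the partially eliminated matrices
  set F : ℕ → Fin n → Fin n → ℝ :=
    fun m i j => ∑ k : Fin n, if m ≤ k.val then L i k * (d k)⁻¹ * U k j else 0 with hF
  have hF0 : ∀ i j, F 0 i j = A i j := by
    intro i j
    rw [h]
    simp [hF, Matrix.mul_apply, Matrix.diagonal_apply, ite_mul, mul_ite, mul_zero,
      zero_mul, Finset.sum_ite_eq, Finset.sum_ite_eq']
  have hstep : ∀ (m : Fin n) (i j : Fin n),
      F m.val i j = L i m * (d m)⁻¹ * U m j + F (m.val + 1) i j := by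
    intro m i j
    simpa only [hF] using s17split m (fun k => L i k * (d k)⁻¹ * U k j)
  have hrow : ∀ (m : Fin n) (j : Fin n), F m.val m j = (d m)⁻¹ * U m j := by
    intro m j
    simp only [hF]
    rw [Finset.sum_eq_single m]
    · rw [if_pos le_rfl, hL.2 m, one_mul]
    · intro k _ hk
      by_cases hmk : m.val ≤ k.val
      · rw [if_pos hmk, hL.1 m k (by exact lt_of_le_of_ne hmk (fun e => hk e.symm))]
        ring
      · rw [if_neg hmk]
    · intro hm; exact absurd (Finset.mem_univ m) hm
  have hcol : ∀ (m : Fin n) (i : Fin n), F m.val i m = L i m * (d m)⁻¹ := by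
    intro m i
    simp only [hF]
    rw [Finset.sum_eq_single m]
    · rw [if_pos le_rfl, hU.2 m, mul_one]
    · intro k _ hk
      by_cases hmk : m.val ≤ k.val
      · rw [if_pos hmk, hU.1 k m (by exact lt_of_le_of_ne hmk (fun e => hk e.symm))]
        ring
      · rw [if_neg hmk]
    · intro hm; exact absurd (Finset.mem_univ m) hm
  have hdiag : ∀ m : Fin n, F m.val m m = (d m)⁻¹ := by
    intro m
    rw [hrow m m, hU.2 m, mul_one]
  -- the invariant
  set P : ℕ → Prop := fun m =>
    (∀ i j : Fin n, m ≤ i.val → m ≤ j.val → i ≠ j → F m i j ≤ 0) ∧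
    (∀ i : Fin n, m ≤ i.val → 0 < ∑ j, (if m ≤ j.val then F m i j * x j else 0)) with hP
  have pivot_pos : ∀ m : Fin n, P m.val → 0 < F m.val m m := by
    intro m hm
    obtain ⟨ha, hb⟩ := hm
    have hs := hb m le_rfl
    have hle : (∑ j, if m.val ≤ j.val then F m.val m j * x j else 0)
        ≤ F m.val m m * x m := by
      calc (∑ j, if m.val ≤ j.val then F m.val m j * x j else 0)
          ≤ ∑ j, (if j = m then F m.val m m * x m else 0) := by
            apply Finset.sum_le_sum
            intro j _
            by_cases hj : j = m
            · subst hj; rw [if_pos le_rfl, if_pos rfl]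
            · rw [if_neg hj]
              by_cases hmj : m.val ≤ j.val
              · rw [if_pos hmj]
                exact mul_nonpos_of_nonpos_of_nonneg
                  (ha m j le_rfl hmj (fun e => hj e.symm)) (hxpos j).le
              · rw [if_neg hmj]
        _ = F m.val m m * x m := by simp
    have hpx : 0 < F m.val m m * x m := lt_of_lt_of_le hs hle
    nlinarith [hxpos m]
  have Pstep : ∀ m : ℕ, P m → P (m + 1) := by
    intro m hm
    by_cases hmn : m < n
    · set m' : Fin n := ⟨m, hmn⟩ with hm'
      have hp : 0 < F m m' m' := pivot_pos m' hm
      obtain ⟨ha, hb⟩ := hm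
      have hd0 : (d m')⁻¹ ≠ 0 := inv_ne_zero (hd m')
      have hrec : ∀ i j : Fin n,
          F (m + 1) i j = F m i j - F m i m' * F m m' j / F m m' m' := by
        intro i j
        have h1 := hstep m' i j
        have h2 := hcol m' i
        have h3 := hrow m' j
        have h4 := hdiag m'
        simp only [hm', Fin.val_mk] at h1 h2 h3 h4 ⊢
        rw [h1, h2, h3, h4]
        field_simp [hd ⟨m, hmn⟩]
        ring
      constructor
      · intro i j hi hj hij
        have him : i ≠ m' := fun e => by rw [e] at hi; simp [hm'] at hi
        have hjm : j ≠ m' := fun e => by rw [e] at hj; simp [hm'] at hj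
        rw [hrec i j]
        have t1 : F m i j ≤ 0 := ha i j (by omega) (by omega) hij
        have t2 : F m i m' ≤ 0 := ha i m' (by omega) (by simp [hm']) him
        have t3 : F m m' j ≤ 0 := ha m' j (by simp [hm']) (by omega) (fun e => hjm e.symm)
        have t4 : 0 ≤ F m i m' * F m m' j / F m m' m' :=
          div_nonneg (by nlinarith) hp.le
        linarith
      · intro i hi
        have him : i ≠ m' := fun e => by rw [e] at hi; simp [hm'] at hi
        set c : ℝ := F m i m' / F m m' m' with hc
        have hcnp : c ≤ 0 :=
          div_nonpos_of_nonpos_of_nonneg (ha i m' (by omega) (by simp [hm']) him) hp.le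
        have hgi := hb i (by omega)
        have hgm := hb m' (by simp [hm'])
        have e1 : (∑ j, if m + 1 ≤ j.val then F (m + 1) i j * x j else 0)
            = (∑ j, if m + 1 ≤ j.val then F m i j * x j else 0)
              - c * (∑ j, if m + 1 ≤ j.val then F m m' j * x j else 0) := by
          rw [Finset.mul_sum, ← Finset.sum_sub_distrib]
          apply Finset.sum_congr rfl
          intro j _
          by_cases hj : m + 1 ≤ j.val
          · rw [if_pos hj, if_pos hj, if_pos hj, hrec i j, hc]
            ring
          · rw [if_neg hj, if_neg hj, if_neg hj]; ring
        have e2 : (∑ j, if m ≤ j.val then F m i j * x j else 0)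
            = F m i m' * x m' + ∑ j, if m + 1 ≤ j.val then F m i j * x j else 0 := by
          simpa only [hm', Fin.val_mk] using s17split m' (fun j => F m i j * x j)
        have e3 : (∑ j, if m ≤ j.val then F m m' j * x j else 0)
            = F m m' m' * x m' + ∑ j, if m + 1 ≤ j.val then F m m' j * x j else 0 := by
          simpa only [hm', Fin.val_mk] using s17split m' (fun j => F m m' j * x j)
        have key : F m i m' * x m' = c * (F m m' m' * x m') := by
          rw [hc]; field_simp
        have hcg : c * (∑ j, if m ≤ j.val then F m m' j * x j else 0) ≤ 0 :=
          mul_nonpos_of_nonpos_of_nonneg hcnp hgm.le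
        rw [e1]
        nlinarith [hgi, hgm, hcg, key, e2, e3]
    · constructor
      · intro i j hi _ _
        have := i.isLt; omega
      · intro i hi
        have := i.isLt; omega
  have Pall : ∀ m : ℕ, P m := by
    intro m
    induction m with
    | zero =>
      constructor
      · intro i j _ _ hij
        rw [hF0]
        exact hoff i j hij
      · intro i _
        have e : (∑ j, if 0 ≤ j.val then F 0 i j * x j else 0) = ∑ j, A i j * x j := by
          apply Finset.sum_congr rfl
          intro j _
          rw [if_pos (Nat.zero_le _), hF0]
        rw [e, hAx i]
        norm_num
    | succ k ih => exact Pstep k ih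
  have dpos : ∀ j : Fin n, 0 < (d j)⁻¹ := by
    intro j
    have := pivot_pos j (Pall j.val)
    rwa [hdiag j] at this
  refine ⟨?_, ?_, dpos⟩
  · intro i j hji
    have ha := (Pall j.val).1
    have h1 : F j.val i j ≤ 0 :=
      ha i j (le_of_lt hji) le_rfl (fun e => absurd e (Fin.ne_of_gt hji))
    rw [hcol j i] at h1
    nlinarith [dpos j]
  · intro i j hij
    have ha := (Pall i.val).1
    have h1 : F i.val i j ≤ 0 :=
      ha i j le_rfl (le_of_lt hij) (Fin.ne_of_lt hij)
    rw [hrow i j] at h1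
    nlinarith [dpos i]
end
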